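/- arXiv:2411.09257 — 2 statements merged into one kernel-verified Lean document; each statement's English description precedes it below -/
import Mathlib

section
/- For every t ≥ 0 and real u with |u| ≤ 1, the probability generating function of the q-iterated GCP satisfies Σ_{n=0}^∞ u^n p^{(q)}(n,t) = G_q∘G_{q−1}∘⋯∘G₁∘G₀(u) evaluated as the nested exponential exp(−Σ_{j_q=1}^{k_q} λ_{q j_q} t (1 − exp(−j_q Σ_{j_{q−1}=1}^{k_{q−1}} λ_{(q−1) j_{q−1}} (1 − ⋯ (1 − exp(−j₁ Σ_{j=1}^k λ_j (1 − u^j))) ⋯ )))), where G₀(u) = exp(−Σ_{j=1}^k λ_j(1−u^j)) and G_i(v) = exp(−Σ_{j_i=1}^{k_i} λ_{i j_i}(1−v^{j_i})) for i = 1,…,q, except that the outermost layer carries the factor t: Σ_n u^n p^{(q)}(n,t) = exp(−Σ_{j_q=1}^{k_q} λ_{q j_q} t (1 − (G_{q−1}∘⋯∘G₀(u))^{j_q})). -/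
/-- GCP state probabilities: `p(n,t) = ∑_{Ω(k,n)} ∏_j ((λ_j t)^{x_j}/x_j!) e^{−λ_j t}`,
where index `j : Fin k` encodes jump size `j+1`. -/
noncomputable def gcpPmf (k : ℕ) (lam : Fin k → ℝ) (n : ℕ) (t : ℝ) : ℝ :=
  ∑' x : Fin k → ℕ,
    if (∑ j : Fin k, ((j : ℕ) + 1) * x j) = n then
      ∏ j : Fin k, (lam j * t) ^ (x j) / (Nat.factorial (x j)) * Real.exp (-(lam j * t))
    else 0

/-- The probability generating function of a GCP:
`G(u,t) = exp(−∑_j λ_j t (1 − u^j))`. -/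
noncomputable def gcpPgf (k : ℕ) (lam : Fin k → ℝ) (t u : ℝ) : ℝ :=
  Real.exp (-(∑ j : Fin k, lam j * t * (1 - u ^ ((j : ℕ) + 1))))

/-- State probabilities of the iterated GCP obtained from the base GCP (rates `lam`)
by successively time-changing with the GCPs in the list (the head of the list is the
outermost subordinator, the one carrying the time argument):
`p^{(i)}(n,t) = ∑_{m=0}^∞ p^{(i−1)}(n,m) p_i(m,t)`, `p^{(0)} = p`. -/
noncomputable def iterGcpPmf (k : ℕ) (lam : Fin k → ℝ) :
    List ((r : ℕ) × (Fin r → ℝ)) → ℕ → ℝ → ℝ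
  | [], n, t => gcpPmf k lam n t
  | ⟨r, Lr⟩ :: rest, n, t => ∑' m : ℕ, iterGcpPmf k lam rest n m * gcpPmf r Lr m t

/-- The nested-exponential composition of GCP probability generating functions:
the inner layers are evaluated at time `1` and the outermost layer carries the time
factor `t`. -/
noncomputable def nestedGcpPgf (k : ℕ) (lam : Fin k → ℝ) :
    List ((r : ℕ) × (Fin r → ℝ)) → ℝ → ℝ → ℝ
  | [], t, u => gcpPgf k lam t u
  | ⟨r, Lr⟩ :: rest, t, u => gcpPgf r Lr t (nestedGcpPgf k lam rest 1 u)

section Aux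

open Real

private lemma tsum_pow_div_fact (a : ℝ) :
    ∑' m : ℕ, a ^ m / (Nat.factorial m : ℝ) = Real.exp a := by
  rw [Real.exp_eq_exp_ℝ, NormedSpace.exp_eq_tsum_div]

/-- Factorization of a tsum over a finite pi type into a product of tsums. -/
private lemma pi_tsum : ∀ (k : ℕ) (f : Fin k → ℕ → ℝ),
    (∀ j, Summable fun m => |f j m|) →
    Summable (fun x : Fin k → ℕ => |∏ j, f j (x j)|) ∧
      ∑' x : Fin k → ℕ, ∏ j, f j (x j) = ∏ j, ∑' m, f j m
  | 0, f, _ => by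
      constructor
      · simp only [Finset.univ_eq_empty, Finset.prod_empty, abs_one]
        exact Summable.of_finite
      · simp only [Finset.univ_eq_empty, Finset.prod_empty]
        rw [tsum_eq_single (fun i => i.elim0) (fun b' hb' => absurd (Subsingleton.elim _ _) hb')]
  | (k + 1), f, hf => by
      obtain ⟨ihS, ihT⟩ := pi_tsum k (fun j => f j.succ) (fun j => hf j.succ)
      set e : (ℕ × (Fin k → ℕ)) ≃ (Fin (k + 1) → ℕ) := Fin.consEquiv (fun _ => ℕ) with he
      have key : ∀ p : ℕ × (Fin k → ℕ),
          ∏ j, f j (e p j) = f 0 p.1 * ∏ j : Fin k, f j.succ (p.2 j) := by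
        intro p
        rw [Fin.prod_univ_succ]
        simp [he, Fin.consEquiv]
      have hG : Summable fun p : ℕ × (Fin k → ℕ) =>
          |f 0 p.1 * ∏ j : Fin k, f j.succ (p.2 j)| := by
        apply (summable_prod_of_nonneg (fun p => abs_nonneg _)).mpr
        constructor
        · intro a
          simp only [abs_mul]
          exact ihS.mul_left _
        · have hcol : ∀ a : ℕ, (∑' y : Fin k → ℕ, |f 0 a * ∏ j : Fin k, f j.succ (y j)|) =
              |f 0 a| * ∑' y : Fin k → ℕ, |∏ j : Fin k, f j.succ (y j)| := by
            intro a
            simp only [abs_mul]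
            exact tsum_mul_left
          simp only [hcol]
          exact (hf 0).mul_right _
      have hS : Summable (fun x : Fin (k + 1) → ℕ => |∏ j, f j (x j)|) := by
        apply e.summable_iff.mp
        exact hG.congr fun p => by simp only [Function.comp_apply, key p]
      refine ⟨hS, ?_⟩
      have hGplain : Summable fun p : ℕ × (Fin k → ℕ) =>
          f 0 p.1 * ∏ j : Fin k, f j.succ (p.2 j) := summable_abs_iff.mp hG
      calc ∑' x : Fin (k + 1) → ℕ, ∏ j, f j (x j)
          = ∑' p : ℕ × (Fin k → ℕ), ∏ j, f j (e p j) := (e.tsum_eq _).symm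
        _ = ∑' p : ℕ × (Fin k → ℕ), f 0 p.1 * ∏ j : Fin k, f j.succ (p.2 j) :=
            tsum_congr key
        _ = ∑' a : ℕ, ∑' y : Fin k → ℕ, f 0 a * ∏ j : Fin k, f j.succ (y j) :=
            Summable.tsum_prod' hGplain (fun a => summable_abs_iff.mp (by
              simp only [abs_mul]; exact ihS.mul_left _))
        _ = ∑' a : ℕ, f 0 a * ∑' y : Fin k → ℕ, ∏ j : Fin k, f j.succ (y j) := by
            exact tsum_congr fun a => tsum_mul_left
        _ = (∑' a : ℕ, f 0 a) * ∑' y : Fin k → ℕ, ∏ j : Fin k, f j.succ (y j) :=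
            tsum_mul_right
        _ = ∏ j : Fin (k + 1), ∑' m, f j m := by
            rw [ihT, Fin.prod_univ_succ]

private lemma gcpPmf_nonneg {k : ℕ} {lam : Fin k → ℝ} (hlam : ∀ j, 0 ≤ lam j)
    {t : ℝ} (ht : 0 ≤ t) (n : ℕ) : 0 ≤ gcpPmf k lam n t := by
  apply tsum_nonneg
  intro x
  split
  · apply Finset.prod_nonneg
    intro j _
    exact mul_nonneg (div_nonneg (pow_nonneg (mul_nonneg (hlam j) ht) _) (by positivity))
      (Real.exp_pos _).le
  · exact le_refl 0

/-- PGF of a single GCP. -/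
private lemma gcp_pgf (k : ℕ) (lam : Fin k → ℝ) (hlam : ∀ j, 0 ≤ lam j) (t : ℝ) (ht : 0 ≤ t)
    (u : ℝ) (hu : |u| ≤ 1) :
    Summable (fun n : ℕ => u ^ n * gcpPmf k lam n t) ∧
      ∑' n : ℕ, u ^ n * gcpPmf k lam n t = gcpPgf k lam t u := by
  set f : Fin k → ℕ → ℝ := fun j m =>
    u ^ (((j : ℕ) + 1) * m) *
      ((lam j * t) ^ m / (Nat.factorial m : ℝ) * Real.exp (-(lam j * t))) with hfdef
  have hfS : ∀ j, Summable fun m => |f j m| := by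
    intro j
    have h0 : 0 ≤ lam j * t := mul_nonneg (hlam j) ht
    have : (fun m => |f j m|) = fun m =>
        (|u| ^ ((j : ℕ) + 1) * (lam j * t)) ^ m / (Nat.factorial m : ℝ) *
          Real.exp (-(lam j * t)) := by
      funext m
      show |u ^ (((j : ℕ) + 1) * m) *
        ((lam j * t) ^ m / (Nat.factorial m : ℝ) * Real.exp (-(lam j * t)))| = _
      rw [abs_mul, abs_of_nonneg (mul_nonneg (div_nonneg (pow_nonneg h0 _) (by positivity))
        (Real.exp_pos _).le), abs_pow, pow_mul, mul_pow]
      ring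
    rw [this]
    exact (Real.summable_pow_div_factorial _).mul_right _
  have hfT : ∀ j : Fin k, ∑' m, f j m =
      Real.exp (-(lam j * t * (1 - u ^ ((j : ℕ) + 1)))) := by
    intro j
    have hrw : (fun m : ℕ => f j m) = fun m =>
        (u ^ ((j : ℕ) + 1) * (lam j * t)) ^ m / (Nat.factorial m : ℝ) *
          Real.exp (-(lam j * t)) := by
      funext m
      show u ^ (((j : ℕ) + 1) * m) *
        ((lam j * t) ^ m / (Nat.factorial m : ℝ) * Real.exp (-(lam j * t))) = _
      rw [pow_mul, mul_pow]
      ring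
    rw [hrw, tsum_mul_right, tsum_pow_div_fact, ← Real.exp_add]
    congr 1
    ring
  obtain ⟨hPS, hPT⟩ := pi_tsum k f hfS
  have hprodeq : ∀ x : Fin k → ℕ, ∏ j, f j (x j) =
      u ^ (∑ j : Fin k, ((j : ℕ) + 1) * x j) *
        ∏ j : Fin k, (lam j * t) ^ (x j) / (Nat.factorial (x j) : ℝ) *
          Real.exp (-(lam j * t)) := by
    intro x
    rw [← Finset.prod_pow_eq_pow_sum, ← Finset.prod_mul_distrib]
  have hGpgf : gcpPgf k lam t u = ∏ j : Fin k, ∑' m, f j m := by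
    rw [gcpPgf, ← Finset.sum_neg_distrib, Real.exp_sum]
    exact Finset.prod_congr rfl fun j _ => (hfT j).symm
  -- graph injection
  set H : ℕ × (Fin k → ℕ) → ℝ := fun p =>
    if (∑ j : Fin k, ((j : ℕ) + 1) * p.2 j) = p.1 then ∏ j, f j (p.2 j) else 0 with hHdef
  set ι : (Fin k → ℕ) → ℕ × (Fin k → ℕ) :=
    fun x => (∑ j : Fin k, ((j : ℕ) + 1) * x j, x) with hιdef
  have hι : Function.Injective ι := fun a b hab => congrArg Prod.snd hab
  have hcomp : ∀ x, H (ι x) = ∏ j, f j (x j) := fun x => if_pos rfl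
  have hrange : ∀ p ∉ Set.range ι, H p = 0 := by
    rintro ⟨n, x⟩ hp
    rw [hHdef]
    simp only
    rw [if_neg]
    intro hcond
    exact hp ⟨x, by rw [hιdef]; simp only; rw [hcond]⟩
  have hH : Summable H := by
    apply (hι.summable_iff hrange).mp
    exact (summable_abs_iff.mp hPS).congr fun x => (hcomp x).symm
  have hHsum : ∑' p, H p = ∑' x : Fin k → ℕ, ∏ j, f j (x j) := by
    rw [← hι.tsum_eq]
    · exact tsum_congr hcomp
    · intro p hp
      by_contra hnot
      exact hp (hrange p hnot)
  have hslice : ∀ n : ℕ, ∑' x : Fin k → ℕ, H (n, x) = u ^ n * gcpPmf k lam n t := by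
    intro n
    rw [gcpPmf, ← tsum_mul_left]
    apply tsum_congr
    intro x
    rw [hHdef]
    simp only
    by_cases hcond : (∑ j : Fin k, ((j : ℕ) + 1) * x j) = n
    · rw [if_pos hcond, if_pos hcond, hprodeq x, hcond]
    · rw [if_neg hcond, if_neg hcond, mul_zero]
  have hmain : (fun n : ℕ => u ^ n * gcpPmf k lam n t) =
      fun n : ℕ => ∑' x : Fin k → ℕ, H (n, x) := funext fun n => (hslice n).symm
  constructor
  · rw [hmain]
    exact hH.prod
  · calc ∑' n : ℕ, u ^ n * gcpPmf k lam n t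
        = ∑' (n : ℕ) (x : Fin k → ℕ), H (n, x) := by rw [hmain]
      _ = ∑' p, H p := (Summable.tsum_prod' hH hH.prod_factor).symm
      _ = ∑' x : Fin k → ℕ, ∏ j, f j (x j) := hHsum
      _ = ∏ j : Fin k, ∑' m, f j m := hPT
      _ = gcpPgf k lam t u := hGpgf.symm

private lemma gcpPgf_abs_le_one {r : ℕ} {Lr : Fin r → ℝ} (hLr : ∀ j, 0 ≤ Lr j)
    {t : ℝ} (ht : 0 ≤ t) {v : ℝ} (hv : |v| ≤ 1) : |gcpPgf r Lr t v| ≤ 1 := by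
  rw [gcpPgf, abs_of_nonneg (Real.exp_pos _).le, Real.exp_le_one_iff, neg_nonpos]
  apply Finset.sum_nonneg
  intro j _
  apply mul_nonneg (mul_nonneg (hLr j) ht)
  rw [sub_nonneg]
  calc v ^ ((j : ℕ) + 1) ≤ |v ^ ((j : ℕ) + 1)| := le_abs_self _
    _ = |v| ^ ((j : ℕ) + 1) := abs_pow v _
    _ ≤ 1 := pow_le_one₀ (abs_nonneg v) hv

private lemma gcpPgf_nat_pow {r : ℕ} (Lr : Fin r → ℝ) (m : ℕ) (v : ℝ) :
    gcpPgf r Lr (m : ℝ) v = gcpPgf r Lr 1 v ^ m := by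
  rw [gcpPgf, gcpPgf, ← Real.exp_nat_mul, mul_neg]
  congr 1
  rw [neg_inj, Finset.mul_sum]
  exact Finset.sum_congr rfl fun j _ => by ring

private lemma nested_abs_le_one (k : ℕ) (lam : Fin k → ℝ) (hlam : ∀ j, 0 ≤ lam j) :
    ∀ (ls : List ((r : ℕ) × (Fin r → ℝ))), (∀ s ∈ ls, ∀ j, 0 ≤ s.2 j) →
    ∀ t : ℝ, 0 ≤ t → ∀ u : ℝ, |u| ≤ 1 → |nestedGcpPgf k lam ls t u| ≤ 1
  | [], _, t, ht, u, hu => gcpPgf_abs_le_one hlam ht hu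
  | ⟨r, Lr⟩ :: rest, h, t, ht, u, hu => by
      have hLr : ∀ j, 0 ≤ Lr j := h ⟨r, Lr⟩ List.mem_cons_self
      have hrest : ∀ s ∈ rest, ∀ j, 0 ≤ s.2 j := fun s hs => h s (List.mem_cons_of_mem _ hs)
      have hv := nested_abs_le_one k lam hlam rest hrest 1 zero_le_one u hu
      exact gcpPgf_abs_le_one hLr ht hv

private lemma nested_nat_pow (k : ℕ) (lam : Fin k → ℝ)
    (ls : List ((r : ℕ) × (Fin r → ℝ))) (m : ℕ) (u : ℝ) :
    nestedGcpPgf k lam ls (m : ℝ) u = nestedGcpPgf k lam ls 1 u ^ m := by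
  match ls with
  | [] => exact gcpPgf_nat_pow lam m u
  | ⟨r, Lr⟩ :: rest => exact gcpPgf_nat_pow Lr m _

private lemma iter_nonneg (k : ℕ) (lam : Fin k → ℝ) (hlam : ∀ j, 0 ≤ lam j) :
    ∀ (ls : List ((r : ℕ) × (Fin r → ℝ))), (∀ s ∈ ls, ∀ j, 0 ≤ s.2 j) →
    ∀ (n : ℕ) (t : ℝ), 0 ≤ t → 0 ≤ iterGcpPmf k lam ls n t
  | [], _, n, t, ht => gcpPmf_nonneg hlam ht n
  | ⟨r, Lr⟩ :: rest, h, n, t, ht => by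
      have hLr : ∀ j, 0 ≤ Lr j := h ⟨r, Lr⟩ List.mem_cons_self
      have hrest : ∀ s ∈ rest, ∀ j, 0 ≤ s.2 j := fun s hs => h s (List.mem_cons_of_mem _ hs)
      apply tsum_nonneg
      intro m
      exact mul_nonneg (iter_nonneg k lam hlam rest hrest n m (Nat.cast_nonneg m))
        (gcpPmf_nonneg hLr ht m)

set_option maxHeartbeats 1000000 in
/-- Main induction: PGF of the iterated GCP. -/
private lemma iter_pgf (k : ℕ) (lam : Fin k → ℝ) (hlam : ∀ j, 0 ≤ lam j) :
    ∀ (ls : List ((r : ℕ) × (Fin r → ℝ))), (∀ s ∈ ls, ∀ j, 0 ≤ s.2 j) →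
    ∀ t : ℝ, 0 ≤ t → ∀ u : ℝ, |u| ≤ 1 →
    Summable (fun n : ℕ => u ^ n * iterGcpPmf k lam ls n t) ∧
      ∑' n : ℕ, u ^ n * iterGcpPmf k lam ls n t = nestedGcpPgf k lam ls t u
  | [], _, t, ht, u, hu => gcp_pgf k lam hlam t ht u hu
  | ⟨r, Lr⟩ :: rest, h, t, ht, u, hu => by
      have hLr : ∀ j, 0 ≤ Lr j := h ⟨r, Lr⟩ List.mem_cons_self
      have hrest : ∀ s ∈ rest, ∀ j, 0 ≤ s.2 j := fun s hs => h s (List.mem_cons_of_mem _ hs)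
      have IH : ∀ (m : ℕ) (u' : ℝ), |u'| ≤ 1 →
          Summable (fun n : ℕ => u' ^ n * iterGcpPmf k lam rest n (m : ℝ)) ∧
            ∑' n : ℕ, u' ^ n * iterGcpPmf k lam rest n (m : ℝ) =
              nestedGcpPgf k lam rest (m : ℝ) u' :=
        fun m u' hu' => iter_pgf k lam hlam rest hrest (m : ℝ) (Nat.cast_nonneg m) u' hu'
      have hu' : |(|u|)| ≤ 1 := by rwa [abs_abs]
      have hv : |nestedGcpPgf k lam rest 1 u| ≤ 1 :=
        nested_abs_le_one k lam hlam rest hrest 1 zero_le_one u hu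
      have hw : |nestedGcpPgf k lam rest 1 (|u|)| ≤ 1 :=
        nested_abs_le_one k lam hlam rest hrest 1 zero_le_one (|u|) hu'
      have hiter_nn : ∀ n m : ℕ, 0 ≤ iterGcpPmf k lam rest n (m : ℝ) :=
        fun n m => iter_nonneg k lam hlam rest hrest n (m : ℝ) (Nat.cast_nonneg m)
      have hgcp_nn : ∀ m : ℕ, 0 ≤ gcpPmf r Lr m t := fun m => gcpPmf_nonneg hLr ht m
      have hA : Summable (fun q : ℕ × ℕ =>
          (|u| ^ q.2 * iterGcpPmf k lam rest q.2 (q.1 : ℝ)) * gcpPmf r Lr q.1 t) := by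
        refine (summable_prod_of_nonneg fun q => ?_).mpr ⟨fun m => ?_, ?_⟩
        · exact mul_nonneg (mul_nonneg (pow_nonneg (abs_nonneg u) _) (hiter_nn _ _)) (hgcp_nn _)
        · simpa using ((IH m (|u|) hu').1).mul_right (gcpPmf r Lr m t)
        · have hcol : ∀ m : ℕ, (∑' n : ℕ,
              (|u| ^ n * iterGcpPmf k lam rest n (m : ℝ)) * gcpPmf r Lr m t)
              = nestedGcpPgf k lam rest 1 (|u|) ^ m * gcpPmf r Lr m t := by
            intro m
            rw [tsum_mul_right, (IH m (|u|) hu').2, nested_nat_pow]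
          simp only [hcol]
          exact (gcp_pgf r Lr hLr t ht _ hw).1
      have hF : Summable (fun p : ℕ × ℕ =>
          u ^ p.1 * (iterGcpPmf k lam rest p.1 (p.2 : ℝ) * gcpPmf r Lr p.2 t)) := by
        apply summable_abs_iff.mp
        have habs : (fun p : ℕ × ℕ =>
            |u ^ p.1 * (iterGcpPmf k lam rest p.1 (p.2 : ℝ) * gcpPmf r Lr p.2 t)|) =
            fun p : ℕ × ℕ =>
              (|u| ^ p.1 * iterGcpPmf k lam rest p.1 (p.2 : ℝ)) * gcpPmf r Lr p.2 t := by
          funext p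
          rw [abs_mul, abs_pow, abs_of_nonneg (mul_nonneg (hiter_nn _ _) (hgcp_nn _)),
            ← mul_assoc]
        rw [habs]
        exact (Equiv.prodComm ℕ ℕ).summable_iff.mpr hA
      have hmain : (fun n : ℕ => u ^ n * iterGcpPmf k lam (⟨r, Lr⟩ :: rest) n t) =
          fun n : ℕ => ∑' m : ℕ,
            u ^ n * (iterGcpPmf k lam rest n (m : ℝ) * gcpPmf r Lr m t) := by
        funext n
        rw [iterGcpPmf, ← tsum_mul_left]
      have hslice : ∀ m : ℕ, (∑' n : ℕ,
          u ^ n * (iterGcpPmf k lam rest n (m : ℝ) * gcpPmf r Lr m t))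
          = nestedGcpPgf k lam rest 1 u ^ m * gcpPmf r Lr m t := by
        intro m
        have hrw : (fun n : ℕ =>
            u ^ n * (iterGcpPmf k lam rest n (m : ℝ) * gcpPmf r Lr m t)) =
            fun n : ℕ => (u ^ n * iterGcpPmf k lam rest n (m : ℝ)) * gcpPmf r Lr m t := by
          funext n
          ring
        rw [hrw, tsum_mul_right, (IH m u hu).2, nested_nat_pow]
      refine ⟨?_, ?_⟩
      · rw [hmain]
        exact hF.prod
      · calc ∑' n : ℕ, u ^ n * iterGcpPmf k lam (⟨r, Lr⟩ :: rest) n t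
            = ∑' (n : ℕ) (m : ℕ),
                u ^ n * (iterGcpPmf k lam rest n (m : ℝ) * gcpPmf r Lr m t) := by
              rw [hmain]
          _ = ∑' (m : ℕ) (n : ℕ),
                u ^ n * (iterGcpPmf k lam rest n (m : ℝ) * gcpPmf r Lr m t) :=
              (Summable.tsum_comm (f := fun (n m : ℕ) =>
                u ^ n * (iterGcpPmf k lam rest n (m : ℝ) * gcpPmf r Lr m t)) hF).symm
          _ = ∑' m : ℕ, nestedGcpPgf k lam rest 1 u ^ m * gcpPmf r Lr m t :=
              tsum_congr hslice
          _ = gcpPgf r Lr t (nestedGcpPgf k lam rest 1 u) :=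
              (gcp_pgf r Lr hLr t ht _ hv).2
          _ = nestedGcpPgf k lam (⟨r, Lr⟩ :: rest) t u := rfl

end Aux

/-- the probability generating function of the `q`-iterated GCP is the
nested exponential `G_q∘G_{q−1}∘⋯∘G₁∘G₀(u)`, the outermost layer carrying the factor
`t`. -/
theorem iterGcp_pgf (k : ℕ) (hk : 0 < k) (lam : Fin k → ℝ) (hlam : ∀ j, 0 < lam j)
    (q : ℕ) (hq : 0 < q) (K : Fin q → ℕ) (hK : ∀ i, 0 < K i)
    (L : (i : Fin q) → Fin (K i) → ℝ) (hL : ∀ i j, 0 < L i j)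
    (t : ℝ) (ht : 0 ≤ t) (u : ℝ) (hu : |u| ≤ 1) :
    ∑' n : ℕ, u ^ n *
        iterGcpPmf k lam
          ((List.ofFn fun i : Fin q => (⟨K i, L i⟩ : (r : ℕ) × (Fin r → ℝ)))).reverse n t =
      nestedGcpPgf k lam
        ((List.ofFn fun i : Fin q => (⟨K i, L i⟩ : (r : ℕ) × (Fin r → ℝ)))).reverse t u := by
  have hls : ∀ s ∈ ((List.ofFn fun i : Fin q =>
      (⟨K i, L i⟩ : (r : ℕ) × (Fin r → ℝ)))).reverse, ∀ j, 0 ≤ s.2 j := by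
    intro s hs
    rw [List.mem_reverse, List.mem_ofFn] at hs
    obtain ⟨i, hi⟩ := hs
    cases hi
    exact fun j => (hL i j).le
  exact (iter_pgf k lam (fun j => (hlam j).le) _ hls t ht u hu).2
end

section
/- For every t ≥ 0, the mean of the q-iterated GCP satisfies Σ_{n=0}^∞ n·p^{(q)}(n,t) = (Σ_{j=1}^k jλ_j)·(Π_{i=1}^q Σ_{j_i=1}^{k_i} j_i λ_{ij_i})·t, and its variance satisfies Var = (Σ_{j=1}^k j²λ_j)·(Π_{i=1}^q Σ_{j_i=1}^{k_i} j_i λ_{ij_i})·t + (Σ_{j=1}^k jλ_j)²·(Π_{r=1}^{q−1} (Σ_{j_r=1}^{k_r} j_r λ_{rj_r})²)·(Σ_{j_q=1}^{k_q} j_q² λ_{qj_q})·t + (Σ_{j=1}^k jλ_j)²·Σ_{r=1}^{q−1} (Σ_{j_r=1}^{k_r} j_r² λ_{rj_r})·t·(Π_{l=1}^{r−1} (Σ_{j_l=1}^{k_l} j_l λ_{lj_l})²)·(Π_{i=r+1}^{q} Σ_{j_i=1}^{k_i} j_i λ_{ij_i}); in particular the variance strictly exceeds the mean for t > 0 (the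 q-iterated GCP is overdispersed). -/
/-- `∑_{j=1}^{r} j ν_j`, the mean jump rate of a GCP with rates `ν`. -/
noncomputable def meanRate (r : ℕ) (nu : Fin r → ℝ) : ℝ :=
  ∑ j : Fin r, ((j : ℕ) + 1 : ℝ) * nu j

/-- `∑_{j=1}^{r} j² ν_j`, the second-moment jump rate of a GCP with rates `ν`. -/
noncomputable def sqRate (r : ℕ) (nu : Fin r → ℝ) : ℝ :=
  ∑ j : Fin r, ((j : ℕ) + 1 : ℝ) ^ 2 * nu j

open scoped ENNReal

noncomputable def poisR (c : ℝ) (m : ℕ) : ℝ := c ^ m / (Nat.factorial m) * Real.exp (-c)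

lemma poisR_nonneg {c : ℝ} (hc : 0 ≤ c) (m : ℕ) : 0 ≤ poisR c m := by
  unfold poisR; positivity

lemma summable_poisR (c : ℝ) : Summable (poisR c) :=
  (Real.summable_pow_div_factorial c).mul_right _

lemma tsum_poisR (c : ℝ) : ∑' m, poisR c m = 1 := by
  unfold poisR
  rw [tsum_mul_right]
  have : ∑' m : ℕ, c ^ m / (Nat.factorial m) = Real.exp c := by
    rw [Real.exp_eq_exp_ℝ, NormedSpace.exp_eq_tsum_div]
  rw [this, ← Real.exp_add]
  simp

lemma poisR_succ (c : ℝ) (m : ℕ) : ((m : ℝ) + 1) * poisR c (m + 1) = c * poisR c m := by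
  unfold poisR
  have h : (Nat.factorial (m+1) : ℝ) = ((m:ℝ)+1) * (Nat.factorial m) := by
    rw [Nat.factorial_succ]; push_cast; ring
  have hm : (Nat.factorial m : ℝ) ≠ 0 := by positivity
  have hm1 : ((m:ℝ)+1) ≠ 0 := by positivity
  rw [h, pow_succ]
  field_simp

lemma summable_id_poisR (c : ℝ) : Summable (fun m : ℕ => (m : ℝ) * poisR c m) := by
  rw [← summable_nat_add_iff 1]
  have : (fun m : ℕ => ((m + 1 : ℕ) : ℝ) * poisR c (m + 1)) = fun m => c * poisR c m := by
    funext m; push_cast; exact poisR_succ c m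
  rw [this]
  exact (summable_poisR c).mul_left c

lemma tsum_id_poisR (c : ℝ) : ∑' m : ℕ, (m : ℝ) * poisR c m = c := by
  rw [Summable.tsum_eq_zero_add (summable_id_poisR c)]
  simp only [Nat.cast_zero, zero_mul, zero_add]
  have : (fun m : ℕ => ((m + 1 : ℕ) : ℝ) * poisR c (m + 1)) = fun m => c * poisR c m := by
    funext m; push_cast; exact poisR_succ c m
  simp only [this]
  rw [tsum_mul_left, tsum_poisR, mul_one]

lemma sq_poisR_succ (c : ℝ) (m : ℕ) :
    (((m+1 : ℕ)) : ℝ) ^ 2 * poisR c (m + 1) = c * ((m:ℝ) * poisR c m) + c * poisR c m := by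
  push_cast
  have h := poisR_succ c m
  have : ((m:ℝ)+1)^2 * poisR c (m+1) = ((m:ℝ)+1) * (((m:ℝ)+1) * poisR c (m+1)) := by ring
  rw [this, h]; ring

lemma summable_sq_poisR (c : ℝ) : Summable (fun m : ℕ => (m : ℝ) ^ 2 * poisR c m) := by
  rw [← summable_nat_add_iff 1]
  have : (fun m : ℕ => ((m + 1 : ℕ) : ℝ) ^ 2 * poisR c (m + 1))
      = fun m : ℕ => c * ((m:ℝ) * poisR c m) + c * poisR c m := by
    funext m; exact sq_poisR_succ c m
  rw [this]
  exact ((summable_id_poisR c).mul_left c).add ((summable_poisR c).mul_left c)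

lemma tsum_sq_poisR (c : ℝ) : ∑' m : ℕ, (m : ℝ) ^ 2 * poisR c m = c + c ^ 2 := by
  rw [Summable.tsum_eq_zero_add (summable_sq_poisR c)]
  simp only [Nat.cast_zero, ne_eq, OfNat.ofNat_ne_zero, not_false_eq_true, zero_pow, zero_mul,
    zero_add]
  have : (fun m : ℕ => ((m + 1 : ℕ) : ℝ) ^ 2 * poisR c (m + 1))
      = fun m : ℕ => c * ((m:ℝ) * poisR c m) + c * poisR c m := by
    funext m; exact sq_poisR_succ c m
  simp only [this]
  rw [Summable.tsum_add ((summable_id_poisR c).mul_left c) ((summable_poisR c).mul_left c),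
    tsum_mul_left, tsum_mul_left, tsum_id_poisR, tsum_poisR]
  ring

noncomputable def poisE (c : ℝ) (m : ℕ) : ℝ≥0∞ := ENNReal.ofReal (poisR c m)

lemma poisE_ne_top (c : ℝ) (m : ℕ) : poisE c m ≠ ⊤ := ENNReal.ofReal_ne_top

lemma tsum_poisE {c : ℝ} (hc : 0 ≤ c) : ∑' m, poisE c m = 1 := by
  unfold poisE
  rw [← ENNReal.ofReal_tsum_of_nonneg (poisR_nonneg hc) (summable_poisR c), tsum_poisR]
  simp

lemma tsum_id_poisE {c : ℝ} (hc : 0 ≤ c) :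
    ∑' m : ℕ, (m : ℝ≥0∞) * poisE c m = ENNReal.ofReal c := by
  have : ∀ m : ℕ, (m : ℝ≥0∞) * poisE c m = ENNReal.ofReal ((m : ℝ) * poisR c m) := by
    intro m
    rw [ENNReal.ofReal_mul (by positivity), ENNReal.ofReal_natCast]; rfl
  simp only [this]
  rw [← ENNReal.ofReal_tsum_of_nonneg (fun m => mul_nonneg (Nat.cast_nonneg m) (poisR_nonneg hc m))
    (summable_id_poisR c), tsum_id_poisR]

lemma tsum_sq_poisE {c : ℝ} (hc : 0 ≤ c) :
    ∑' m : ℕ, (m : ℝ≥0∞) ^ 2 * poisE c m = ENNReal.ofReal (c + c ^ 2) := by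
  have : ∀ m : ℕ, (m : ℝ≥0∞) ^ 2 * poisE c m = ENNReal.ofReal ((m : ℝ) ^ 2 * poisR c m) := by
    intro m
    rw [ENNReal.ofReal_mul (by positivity), ← ENNReal.ofReal_natCast m, ← ENNReal.ofReal_pow (Nat.cast_nonneg m)]
    rfl
  simp only [this]
  rw [← ENNReal.ofReal_tsum_of_nonneg (fun m => mul_nonneg (by positivity) (poisR_nonneg hc m))
    (summable_sq_poisR c), tsum_sq_poisR]

lemma tsum_pi_prod : ∀ {k : ℕ} (F : Fin k → ℕ → ℝ≥0∞),
    ∑' x : Fin k → ℕ, ∏ j, F j (x j) = ∏ j, ∑' m, F j m := by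
  intro k
  induction k with
  | zero =>
    intro F
    simp only [Finset.univ_eq_empty, Finset.prod_empty]
    haveI : Unique (Fin 0 → ℕ) := ⟨⟨fun i => i.elim0⟩, fun f => funext fun i => i.elim0⟩
    rw [tsum_eq_single default (fun b hb => absurd (Subsingleton.elim b default) hb)]
  | succ k ih =>
    intro F
    rw [← (Fin.consEquiv (fun _ : Fin (k+1) => ℕ)).tsum_eq]
    have hsymm : ∀ p : ℕ × (Fin k → ℕ),
        (Fin.consEquiv (fun _ : Fin (k+1) => ℕ)) p = Fin.cons p.1 p.2 := fun p => rfl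
    simp only [hsymm]
    rw [ENNReal.tsum_prod']
    simp only [Fin.prod_univ_succ, Fin.cons_zero, Fin.cons_succ]
    calc ∑' (a : ℕ) (y : Fin k → ℕ), F 0 a * ∏ j : Fin k, F j.succ (y j)
        = ∑' (a : ℕ), F 0 a * ∑' (y : Fin k → ℕ), ∏ j : Fin k, F j.succ (y j) := by
          congr 1; funext a; exact ENNReal.tsum_mul_left
      _ = (∑' m, F 0 m) * ∏ i : Fin k, ∑' m, F i.succ m := by
          rw [ih (fun j => F j.succ), ENNReal.tsum_mul_right]

noncomputable def gcpE (k : ℕ) (lam : Fin k → ℝ) (n : ℕ) (t : ℝ) : ℝ≥0∞ :=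
  ∑' x : Fin k → ℕ,
    if (∑ j : Fin k, ((j : ℕ) + 1) * x j) = n then ∏ j, poisE (lam j * t) (x j) else 0

lemma gcpE_moment {k : ℕ} (lam : Fin k → ℝ) (t : ℝ) (w : ℕ → ℝ≥0∞) :
    ∑' n, w n * gcpE k lam n t
      = ∑' x : Fin k → ℕ,
          w (∑ j : Fin k, ((j : ℕ) + 1) * x j) * ∏ j, poisE (lam j * t) (x j) := by
  unfold gcpE
  simp only [← ENNReal.tsum_mul_left]
  rw [ENNReal.tsum_comm]
  congr 1
  funext x
  have : ∀ n : ℕ, (w n * if (∑ j : Fin k, ((j : ℕ) + 1) * x j) = n then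
        (∏ j, poisE (lam j * t) (x j)) else 0)
      = if n = (∑ j : Fin k, ((j : ℕ) + 1) * x j) then
          w (∑ j : Fin k, ((j : ℕ) + 1) * x j) * ∏ j, poisE (lam j * t) (x j) else 0 := by
    intro n
    by_cases h : (∑ j : Fin k, ((j : ℕ) + 1) * x j) = n
    · subst h; simp
    · rw [if_neg h, if_neg (fun hh => h hh.symm), mul_zero]
  simp only [this]
  exact tsum_ite_eq _ _

lemma gcpE_mass {k : ℕ} {lam : Fin k → ℝ} {t : ℝ} (hlam : ∀ j, 0 ≤ lam j) (ht : 0 ≤ t) :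
    ∑' n, gcpE k lam n t = 1 := by
  have := gcpE_moment lam t (fun _ => 1)
  simp only [one_mul] at this
  rw [this, tsum_pi_prod]
  refine Finset.prod_eq_one fun j _ => tsum_poisE (mul_nonneg (hlam j) ht)

lemma gcpE_mark1 {k : ℕ} {lam : Fin k → ℝ} {t : ℝ} (hlam : ∀ j, 0 ≤ lam j) (ht : 0 ≤ t)
    (j0 : Fin k) :
    ∑' x : Fin k → ℕ, (x j0 : ℝ≥0∞) * ∏ j, poisE (lam j * t) (x j)
      = ENNReal.ofReal (lam j0 * t) := by
  have hrw : ∀ x : Fin k → ℕ, (x j0 : ℝ≥0∞) * ∏ j, poisE (lam j * t) (x j)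
      = ∏ j, (if j = j0 then (x j : ℝ≥0∞) else 1) * poisE (lam j * t) (x j) := by
    intro x
    rw [Finset.prod_mul_distrib, Finset.prod_ite_eq' Finset.univ j0 (fun j => (x j : ℝ≥0∞))]
    simp
  simp only [hrw]
  rw [tsum_pi_prod (fun j m => (if j = j0 then (m : ℝ≥0∞) else 1) * poisE (lam j * t) m)]
  have hj : ∀ j : Fin k, (∑' m : ℕ, (if j = j0 then (m : ℝ≥0∞) else 1) * poisE (lam j * t) m)
      = if j = j0 then ENNReal.ofReal (lam j0 * t) else 1 := by
    intro j
    by_cases h : j = j0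
    · subst h; simp only [if_pos rfl]; exact tsum_id_poisE (mul_nonneg (hlam j) ht)
    · simp only [if_neg h, one_mul]; exact tsum_poisE (mul_nonneg (hlam j) ht)
  simp only [hj]
  rw [Finset.prod_ite_eq' Finset.univ j0 (fun _ => ENNReal.ofReal (lam j0 * t))]
  simp

lemma gcpE_mark2 {k : ℕ} {lam : Fin k → ℝ} {t : ℝ} (hlam : ∀ j, 0 ≤ lam j) (ht : 0 ≤ t)
    (j0 j1 : Fin k) (hne : j0 ≠ j1) :
    ∑' x : Fin k → ℕ, (x j0 : ℝ≥0∞) * (x j1 : ℝ≥0∞) * ∏ j, poisE (lam j * t) (x j)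
      = ENNReal.ofReal (lam j0 * t) * ENNReal.ofReal (lam j1 * t) := by
  have hrw : ∀ x : Fin k → ℕ, (x j0 : ℝ≥0∞) * (x j1 : ℝ≥0∞) * ∏ j, poisE (lam j * t) (x j)
      = ∏ j, (if j = j0 then (x j : ℝ≥0∞) else 1) * (if j = j1 then (x j : ℝ≥0∞) else 1)
          * poisE (lam j * t) (x j) := by
    intro x
    rw [Finset.prod_mul_distrib, Finset.prod_mul_distrib,
      Finset.prod_ite_eq' Finset.univ j0 (fun j => (x j : ℝ≥0∞)),
      Finset.prod_ite_eq' Finset.univ j1 (fun j => (x j : ℝ≥0∞))]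
    simp
  simp only [hrw]
  rw [tsum_pi_prod (fun j m => (if j = j0 then (m : ℝ≥0∞) else 1)
    * (if j = j1 then (m : ℝ≥0∞) else 1) * poisE (lam j * t) m)]
  have hj : ∀ j : Fin k, (∑' m : ℕ, (if j = j0 then (m : ℝ≥0∞) else 1)
        * (if j = j1 then (m : ℝ≥0∞) else 1) * poisE (lam j * t) m)
      = (if j = j0 then ENNReal.ofReal (lam j0 * t) else 1)
        * (if j = j1 then ENNReal.ofReal (lam j1 * t) else 1) := by
    intro j
    by_cases h0 : j = j0
    · subst h0
      simp only [if_pos rfl, if_neg hne, mul_one]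
      exact tsum_id_poisE (mul_nonneg (hlam _) ht)
    · by_cases h1 : j = j1
      · subst h1
        simp only [if_neg h0, if_pos rfl, one_mul]
        exact tsum_id_poisE (mul_nonneg (hlam j) ht)
      · simp only [if_neg h0, if_neg h1, one_mul]
        exact tsum_poisE (mul_nonneg (hlam j) ht)
  simp only [hj]
  rw [Finset.prod_mul_distrib,
    Finset.prod_ite_eq' Finset.univ j0 (fun _ => ENNReal.ofReal (lam j0 * t)),
    Finset.prod_ite_eq' Finset.univ j1 (fun _ => ENNReal.ofReal (lam j1 * t))]
  simp

lemma gcpE_markd {k : ℕ} {lam : Fin k → ℝ} {t : ℝ} (hlam : ∀ j, 0 ≤ lam j) (ht : 0 ≤ t)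
    (j0 : Fin k) :
    ∑' x : Fin k → ℕ, (x j0 : ℝ≥0∞) * (x j0 : ℝ≥0∞) * ∏ j, poisE (lam j * t) (x j)
      = ENNReal.ofReal (lam j0 * t) * ENNReal.ofReal (lam j0 * t)
        + ENNReal.ofReal (lam j0 * t) := by
  have hrw : ∀ x : Fin k → ℕ, (x j0 : ℝ≥0∞) * (x j0 : ℝ≥0∞) * ∏ j, poisE (lam j * t) (x j)
      = ∏ j, (if j = j0 then (x j : ℝ≥0∞) ^ 2 else 1) * poisE (lam j * t) (x j) := by
    intro x
    rw [Finset.prod_mul_distrib, Finset.prod_ite_eq' Finset.univ j0 (fun j => (x j : ℝ≥0∞) ^ 2)]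
    simp [sq]
  simp only [hrw]
  rw [tsum_pi_prod (fun j m => (if j = j0 then (m : ℝ≥0∞) ^ 2 else 1) * poisE (lam j * t) m)]
  have hj : ∀ j : Fin k, (∑' m : ℕ, (if j = j0 then (m : ℝ≥0∞) ^ 2 else 1) * poisE (lam j * t) m)
      = if j = j0 then ENNReal.ofReal (lam j0 * t + (lam j0 * t) ^ 2) else 1 := by
    intro j
    by_cases h : j = j0
    · subst h; simp only [if_pos rfl]; exact tsum_sq_poisE (mul_nonneg (hlam j) ht)
    · simp only [if_neg h, one_mul]; exact tsum_poisE (mul_nonneg (hlam j) ht)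
  simp only [hj]
  rw [Finset.prod_ite_eq' Finset.univ j0 (fun _ => ENNReal.ofReal (lam j0 * t + (lam j0 * t) ^ 2))]
  have ha : 0 ≤ lam j0 * t := mul_nonneg (hlam j0) ht
  simp only [Finset.mem_univ, if_pos]
  rw [ENNReal.ofReal_add ha (by positivity), ENNReal.ofReal_pow ha, sq, add_comm]

lemma coeff_ofReal (j : ℕ) : ((j : ℝ≥0∞) + 1) = ENNReal.ofReal ((j : ℝ) + 1) := by
  rw [ENNReal.ofReal_add (by positivity) zero_le_one, ENNReal.ofReal_natCast,
    ENNReal.ofReal_one]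

lemma helper_mean {k : ℕ} {lam : Fin k → ℝ} {t : ℝ} (hlam : ∀ j, 0 ≤ lam j) (ht : 0 ≤ t) :
    ∑ j : Fin k, (((j : ℕ) : ℝ≥0∞) + 1) * ENNReal.ofReal (lam j * t)
      = ENNReal.ofReal (meanRate k lam * t) := by
  have : ∀ j : Fin k, (((j : ℕ) : ℝ≥0∞) + 1) * ENNReal.ofReal (lam j * t)
      = ENNReal.ofReal (((j : ℕ) + 1 : ℝ) * (lam j * t)) := by
    intro j
    rw [coeff_ofReal, ← ENNReal.ofReal_mul (by positivity)]
  simp only [this]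
  rw [← ENNReal.ofReal_sum_of_nonneg (fun j _ => by
    have := hlam j; positivity)]
  congr 1
  rw [meanRate, Finset.sum_mul]
  exact Finset.sum_congr rfl fun j _ => by ring

lemma helper_sq {k : ℕ} {lam : Fin k → ℝ} {t : ℝ} (hlam : ∀ j, 0 ≤ lam j) (ht : 0 ≤ t) :
    ∑ j : Fin k, ((((j : ℕ) : ℝ≥0∞) + 1) * (((j : ℕ) : ℝ≥0∞) + 1)) * ENNReal.ofReal (lam j * t)
      = ENNReal.ofReal (sqRate k lam * t) := by
  have : ∀ j : Fin k, ((((j : ℕ) : ℝ≥0∞) + 1) * (((j : ℕ) : ℝ≥0∞) + 1))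
        * ENNReal.ofReal (lam j * t)
      = ENNReal.ofReal ((((j : ℕ) + 1 : ℝ) * ((j : ℕ) + 1 : ℝ)) * (lam j * t)) := by
    intro j
    rw [coeff_ofReal, ← ENNReal.ofReal_mul (by positivity), ← ENNReal.ofReal_mul (by positivity)]
  simp only [this]
  rw [← ENNReal.ofReal_sum_of_nonneg (fun j _ => by
    have := hlam j; positivity)]
  congr 1
  rw [sqRate, Finset.sum_mul]
  exact Finset.sum_congr rfl fun j _ => by ring

lemma gcpE_mean {k : ℕ} {lam : Fin k → ℝ} {t : ℝ} (hlam : ∀ j, 0 ≤ lam j) (ht : 0 ≤ t) :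
    ∑' n : ℕ, (n : ℝ≥0∞) * gcpE k lam n t = ENNReal.ofReal (meanRate k lam * t) := by
  rw [gcpE_moment]
  have hc : ∀ x : Fin k → ℕ, ((∑ j : Fin k, ((j : ℕ) + 1) * x j : ℕ) : ℝ≥0∞)
      = ∑ j : Fin k, (((j : ℕ) : ℝ≥0∞) + 1) * (x j : ℝ≥0∞) := by
    intro x; push_cast; rfl
  simp only [hc, Finset.sum_mul, mul_assoc]
  rw [Summable.tsum_finsetSum (fun j _ => ENNReal.summable)]
  simp only [ENNReal.tsum_mul_left]
  have : ∀ j : Fin k, (∑' x : Fin k → ℕ, (x j : ℝ≥0∞) * ∏ l, poisE (lam l * t) (x l))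
      = ENNReal.ofReal (lam j * t) := fun j => gcpE_mark1 hlam ht j
  simp only [this]
  exact helper_mean hlam ht

lemma gcpE_sq {k : ℕ} {lam : Fin k → ℝ} {t : ℝ} (hlam : ∀ j, 0 ≤ lam j) (ht : 0 ≤ t) :
    ∑' n : ℕ, (n : ℝ≥0∞) ^ 2 * gcpE k lam n t
      = ENNReal.ofReal (sqRate k lam * t + (meanRate k lam * t) ^ 2) := by
  rw [gcpE_moment]
  have hc : ∀ x : Fin k → ℕ, ((∑ j : Fin k, ((j : ℕ) + 1) * x j : ℕ) : ℝ≥0∞)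
      = ∑ j : Fin k, (((j : ℕ) : ℝ≥0∞) + 1) * (x j : ℝ≥0∞) := by
    intro x; push_cast; rfl
  have key : ∀ x : Fin k → ℕ,
      ((∑ j : Fin k, ((j : ℕ) + 1) * x j : ℕ) : ℝ≥0∞) ^ 2 * ∏ j, poisE (lam j * t) (x j)
      = ∑ j : Fin k, ∑ l : Fin k,
          ((((j : ℕ) : ℝ≥0∞) + 1) * (((l : ℕ) : ℝ≥0∞) + 1))
            * ((x j : ℝ≥0∞) * (x l : ℝ≥0∞) * ∏ i, poisE (lam i * t) (x i)) := by
    intro x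
    rw [hc, sq, Finset.sum_mul_sum, Finset.sum_mul]
    refine Finset.sum_congr rfl fun j _ => ?_
    rw [Finset.sum_mul]
    refine Finset.sum_congr rfl fun l _ => by ring
  simp only [key]
  rw [Summable.tsum_finsetSum (fun j _ => ENNReal.summable)]
  have : ∀ j : Fin k, (∑' x : Fin k → ℕ, ∑ l : Fin k,
        ((((j : ℕ) : ℝ≥0∞) + 1) * (((l : ℕ) : ℝ≥0∞) + 1))
          * ((x j : ℝ≥0∞) * (x l : ℝ≥0∞) * ∏ i, poisE (lam i * t) (x i)))
      = ∑ l : Fin k, ((((j : ℕ) : ℝ≥0∞) + 1) * (((l : ℕ) : ℝ≥0∞) + 1))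
          * (∑' x : Fin k → ℕ, (x j : ℝ≥0∞) * (x l : ℝ≥0∞) * ∏ i, poisE (lam i * t) (x i)) := by
    intro j
    rw [Summable.tsum_finsetSum (fun l _ => ENNReal.summable)]
    exact Finset.sum_congr rfl fun l _ => ENNReal.tsum_mul_left
  simp only [this]
  have hval : ∀ j l : Fin k,
      (∑' x : Fin k → ℕ, (x j : ℝ≥0∞) * (x l : ℝ≥0∞) * ∏ i, poisE (lam i * t) (x i))
      = ENNReal.ofReal (lam j * t) * ENNReal.ofReal (lam l * t)
        + if j = l then ENNReal.ofReal (lam j * t) else 0 := by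
    intro j l
    by_cases h : j = l
    · subst h; rw [gcpE_markd hlam ht j, if_pos rfl]
    · rw [gcpE_mark2 hlam ht j l h, if_neg h, add_zero]
  have hval' : ∀ j l : Fin k,
      ((((j : ℕ) : ℝ≥0∞) + 1) * (((l : ℕ) : ℝ≥0∞) + 1))
        * (∑' x : Fin k → ℕ, (x j : ℝ≥0∞) * (x l : ℝ≥0∞) * ∏ i, poisE (lam i * t) (x i))
      = ((((j : ℕ) : ℝ≥0∞) + 1) * (((l : ℕ) : ℝ≥0∞) + 1))
          * (ENNReal.ofReal (lam j * t) * ENNReal.ofReal (lam l * t))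
        + ((((j : ℕ) : ℝ≥0∞) + 1) * (((l : ℕ) : ℝ≥0∞) + 1))
          * (if j = l then ENNReal.ofReal (lam j * t) else 0) := by
    intro j l; rw [hval, mul_add]
  simp only [hval', Finset.sum_add_distrib]
  have h1 : ∑ j : Fin k, ∑ l : Fin k,
      ((((j : ℕ) : ℝ≥0∞) + 1) * (((l : ℕ) : ℝ≥0∞) + 1))
        * (ENNReal.ofReal (lam j * t) * ENNReal.ofReal (lam l * t))
      = ENNReal.ofReal (meanRate k lam * t) ^ 2 := by
    have : ∀ j l : Fin k, ((((j : ℕ) : ℝ≥0∞) + 1) * (((l : ℕ) : ℝ≥0∞) + 1))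
          * (ENNReal.ofReal (lam j * t) * ENNReal.ofReal (lam l * t))
        = ((((j : ℕ) : ℝ≥0∞) + 1) * ENNReal.ofReal (lam j * t))
          * ((((l : ℕ) : ℝ≥0∞) + 1) * ENNReal.ofReal (lam l * t)) := by intro j l; ring
    simp only [this, ← Finset.mul_sum, ← Finset.sum_mul]
    rw [helper_mean hlam ht, sq]
  have h2 : ∑ j : Fin k, ∑ l : Fin k,
      ((((j : ℕ) : ℝ≥0∞) + 1) * (((l : ℕ) : ℝ≥0∞) + 1))
        * (if j = l then ENNReal.ofReal (lam j * t) else 0)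
      = ENNReal.ofReal (sqRate k lam * t) := by
    have : ∀ j : Fin k, ∑ l : Fin k, ((((j : ℕ) : ℝ≥0∞) + 1) * (((l : ℕ) : ℝ≥0∞) + 1))
          * (if j = l then ENNReal.ofReal (lam j * t) else 0)
        = ((((j : ℕ) : ℝ≥0∞) + 1) * (((j : ℕ) : ℝ≥0∞) + 1)) * ENNReal.ofReal (lam j * t) := by
      intro j
      rw [Finset.sum_eq_single j]
      · rw [if_pos rfl]
      · intro l _ hl; rw [if_neg (fun h => hl h.symm), mul_zero]
      · intro h; exact absurd (Finset.mem_univ j) h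
    simp only [this]
    exact helper_sq hlam ht
  have hmean : 0 ≤ meanRate k lam * t :=
    mul_nonneg (Finset.sum_nonneg fun j _ => mul_nonneg (by positivity) (hlam j)) ht
  have hsq : 0 ≤ sqRate k lam * t :=
    mul_nonneg (Finset.sum_nonneg fun j _ => mul_nonneg (by positivity) (hlam j)) ht
  rw [h1, h2, ENNReal.ofReal_add hsq (by positivity), ENNReal.ofReal_pow hmean, add_comm]

lemma meanRate_pos {r : ℕ} (hr : 0 < r) {nu : Fin r → ℝ} (hnu : ∀ j, 0 < nu j) :
    0 < meanRate r nu := by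
  haveI : Nonempty (Fin r) := ⟨⟨0, hr⟩⟩
  exact Finset.sum_pos (fun j _ => by have := hnu j; positivity) Finset.univ_nonempty

lemma sqRate_pos {r : ℕ} (hr : 0 < r) {nu : Fin r → ℝ} (hnu : ∀ j, 0 < nu j) :
    0 < sqRate r nu := by
  haveI : Nonempty (Fin r) := ⟨⟨0, hr⟩⟩
  exact Finset.sum_pos (fun j _ => by have := hnu j; positivity) Finset.univ_nonempty

lemma meanRate_le_sqRate {r : ℕ} {nu : Fin r → ℝ} (hnu : ∀ j, 0 < nu j) :
    meanRate r nu ≤ sqRate r nu := by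
  refine Finset.sum_le_sum fun j _ => ?_
  have h0 : (0 : ℝ) ≤ (j : ℕ) := Nat.cast_nonneg _
  have h1 : ((j : ℕ) + 1 : ℝ) ≤ ((j : ℕ) + 1 : ℝ) ^ 2 := by nlinarith
  exact mul_le_mul_of_nonneg_right h1 (hnu j).le

noncomputable def iterE (k : ℕ) (lam : Fin k → ℝ) :
    List ((r : ℕ) × (Fin r → ℝ)) → ℕ → ℝ → ℝ≥0∞
  | [], n, t => gcpE k lam n t
  | ⟨r, Lr⟩ :: rest, n, t => ∑' m : ℕ, iterE k lam rest n m * gcpE r Lr m t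

noncomputable def Apar (k : ℕ) (lam : Fin k → ℝ) : List ((r : ℕ) × (Fin r → ℝ)) → ℝ
  | [] => meanRate k lam
  | ⟨r, Lr⟩ :: rest => Apar k lam rest * meanRate r Lr

noncomputable def Bpar (k : ℕ) (lam : Fin k → ℝ) : List ((r : ℕ) × (Fin r → ℝ)) → ℝ
  | [] => sqRate k lam
  | ⟨r, Lr⟩ :: rest => Bpar k lam rest * meanRate r Lr + (Apar k lam rest) ^ 2 * sqRate r Lr

lemma iterE_props {k : ℕ} (hk : 0 < k) {lam : Fin k → ℝ} (hlam : ∀ j, 0 < lam j)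
    (l : List ((r : ℕ) × (Fin r → ℝ))) (hl : ∀ p ∈ l, 0 < p.1 ∧ ∀ j, 0 < p.2 j) :
    0 < Apar k lam l ∧ Apar k lam l ≤ Bpar k lam l ∧
    ∀ t : ℝ, 0 ≤ t →
      (∑' n, iterE k lam l n t = 1) ∧
      (∑' n : ℕ, (n : ℝ≥0∞) * iterE k lam l n t = ENNReal.ofReal (Apar k lam l * t)) ∧
      (∑' n : ℕ, (n : ℝ≥0∞) ^ 2 * iterE k lam l n t
        = ENNReal.ofReal (Bpar k lam l * t + (Apar k lam l * t) ^ 2)) := by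
  induction l with
  | nil =>
    have hlam' : ∀ j, 0 ≤ lam j := fun j => (hlam j).le
    refine ⟨meanRate_pos hk hlam, meanRate_le_sqRate hlam, fun t ht => ?_⟩
    exact ⟨gcpE_mass hlam' ht, gcpE_mean hlam' ht, gcpE_sq hlam' ht⟩
  | cons p rest ih =>
    obtain ⟨r, Lr⟩ := p
    have hr : 0 < r := (hl _ (List.mem_cons_self)).1
    have hLr : ∀ j, 0 < Lr j := (hl _ (List.mem_cons_self)).2
    have hLr' : ∀ j, 0 ≤ Lr j := fun j => (hLr j).le
    obtain ⟨hA, hAB, hmom⟩ := ih (fun p hp => hl p (List.mem_cons_of_mem _ hp))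
    set A := Apar k lam rest with hAdef
    set B := Bpar k lam rest with hBdef
    have hmu : 0 < meanRate r Lr := meanRate_pos hr hLr
    have hs : 0 < sqRate r Lr := sqRate_pos hr hLr
    have hApos' : 0 < Apar k lam (⟨r, Lr⟩ :: rest) := by
      simp only [Apar]; exact mul_pos hA hmu
    refine ⟨hApos', ?_, fun t ht => ?_⟩
    · simp only [Apar, Bpar]; nlinarith [sq_nonneg A]
    have hiter : ∀ n, iterE k lam (⟨r, Lr⟩ :: rest) n t
        = ∑' m : ℕ, iterE k lam rest n m * gcpE r Lr m t := fun n => rfl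
    have hmass : ∑' n, iterE k lam (⟨r, Lr⟩ :: rest) n t = 1 := by
      simp only [hiter]
      rw [ENNReal.tsum_comm]
      have : ∀ m : ℕ, (∑' n, iterE k lam rest n m * gcpE r Lr m t) = gcpE r Lr m t := by
        intro m
        rw [ENNReal.tsum_mul_right, (hmom (m : ℝ) (Nat.cast_nonneg m)).1, one_mul]
      simp only [this]
      exact gcpE_mass hLr' ht
    have hmean : ∑' n : ℕ, (n : ℝ≥0∞) * iterE k lam (⟨r, Lr⟩ :: rest) n t
        = ENNReal.ofReal (Apar k lam (⟨r, Lr⟩ :: rest) * t) := by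
      simp only [hiter, ← ENNReal.tsum_mul_left]
      rw [ENNReal.tsum_comm]
      have : ∀ m : ℕ, (∑' n : ℕ, (n : ℝ≥0∞) * (iterE k lam rest n m * gcpE r Lr m t))
          = (ENNReal.ofReal A * (m : ℝ≥0∞)) * gcpE r Lr m t := by
        intro m
        simp only [← mul_assoc]
        rw [ENNReal.tsum_mul_right, (hmom (m : ℝ) (Nat.cast_nonneg m)).2.1,
          ENNReal.ofReal_mul hA.le, ENNReal.ofReal_natCast]
      simp only [this, mul_assoc]
      rw [ENNReal.tsum_mul_left]
      rw [gcpE_mean hLr' ht, ← ENNReal.ofReal_mul hA.le]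
      simp only [Apar, ← hAdef]
      rw [mul_assoc]
    have hsq : ∑' n : ℕ, (n : ℝ≥0∞) ^ 2 * iterE k lam (⟨r, Lr⟩ :: rest) n t
        = ENNReal.ofReal (Bpar k lam (⟨r, Lr⟩ :: rest) * t
            + (Apar k lam (⟨r, Lr⟩ :: rest) * t) ^ 2) := by
      simp only [hiter, ← ENNReal.tsum_mul_left]
      rw [ENNReal.tsum_comm]
      have step : ∀ m : ℕ, (∑' n : ℕ, (n : ℝ≥0∞) ^ 2 * (iterE k lam rest n m * gcpE r Lr m t))
          = (ENNReal.ofReal B * (m : ℝ≥0∞) + ENNReal.ofReal (A ^ 2) * (m : ℝ≥0∞) ^ 2)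
              * gcpE r Lr m t := by
        intro m
        simp only [← mul_assoc]
        rw [ENNReal.tsum_mul_right, (hmom (m : ℝ) (Nat.cast_nonneg m)).2.2]
        congr 1
        have hB : (0 : ℝ) ≤ B := hA.le.trans hAB
        have mnn : (0 : ℝ) ≤ (m : ℝ) := Nat.cast_nonneg m
        rw [ENNReal.ofReal_add (mul_nonneg hB mnn) (sq_nonneg _), ENNReal.ofReal_mul hB,
          ENNReal.ofReal_natCast, mul_pow, ENNReal.ofReal_mul (sq_nonneg A),
          ENNReal.ofReal_pow mnn, ENNReal.ofReal_natCast]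
      simp only [step, add_mul]
      rw [ENNReal.tsum_add]
      simp only [mul_assoc]
      have hB : (0 : ℝ) ≤ B := hA.le.trans hAB
      have hmt : (0 : ℝ) ≤ meanRate r Lr * t := mul_nonneg hmu.le ht
      have hst : (0 : ℝ) ≤ sqRate r Lr * t + (meanRate r Lr * t) ^ 2 :=
        add_nonneg (mul_nonneg hs.le ht) (sq_nonneg _)
      rw [ENNReal.tsum_mul_left, ENNReal.tsum_mul_left, gcpE_mean hLr' ht, gcpE_sq hLr' ht,
        ← ENNReal.ofReal_mul hB, ← ENNReal.ofReal_mul (sq_nonneg A),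
        ← ENNReal.ofReal_add (mul_nonneg hB hmt) (mul_nonneg (sq_nonneg A) hst)]
      congr 1
      simp only [Apar, Bpar, ← hAdef, ← hBdef]
      ring
    exact ⟨hmass, hmean, hsq⟩

lemma gcpE_le_one {k : ℕ} {lam : Fin k → ℝ} {t : ℝ} (hlam : ∀ j, 0 ≤ lam j) (ht : 0 ≤ t)
    (n : ℕ) : gcpE k lam n t ≤ 1 := by
  rw [← gcpE_mass hlam ht]
  exact ENNReal.le_tsum n

lemma iterE_le_one {k : ℕ} (hk : 0 < k) {lam : Fin k → ℝ} (hlam : ∀ j, 0 < lam j)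
    {l : List ((r : ℕ) × (Fin r → ℝ))} (hl : ∀ p ∈ l, 0 < p.1 ∧ ∀ j, 0 < p.2 j)
    {t : ℝ} (ht : 0 ≤ t) (n : ℕ) : iterE k lam l n t ≤ 1 := by
  rw [← ((iterE_props hk hlam l hl).2.2 t ht).1]
  exact ENNReal.le_tsum n

lemma gcpPmf_eq {k : ℕ} {lam : Fin k → ℝ} {t : ℝ} (hlam : ∀ j, 0 ≤ lam j) (ht : 0 ≤ t)
    (n : ℕ) : gcpPmf k lam n t = (gcpE k lam n t).toReal := by
  unfold gcpPmf gcpE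
  rw [ENNReal.tsum_toReal_eq (fun x => by
    split_ifs
    · exact ENNReal.prod_ne_top fun j _ => ENNReal.ofReal_ne_top
    · exact ENNReal.zero_ne_top)]
  congr 1
  funext x
  split_ifs
  · rw [ENNReal.toReal_prod]
    refine Finset.prod_congr rfl fun j _ => ?_
    show _ = (ENNReal.ofReal (poisR (lam j * t) (x j))).toReal
    rw [ENNReal.toReal_ofReal (poisR_nonneg (mul_nonneg (hlam j) ht) (x j))]
    rfl
  · simp

lemma iterPmf_eq {k : ℕ} (hk : 0 < k) {lam : Fin k → ℝ} (hlam : ∀ j, 0 < lam j)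
    (l : List ((r : ℕ) × (Fin r → ℝ))) (hl : ∀ p ∈ l, 0 < p.1 ∧ ∀ j, 0 < p.2 j)
    {t : ℝ} (ht : 0 ≤ t) (n : ℕ) :
    iterGcpPmf k lam l n t = (iterE k lam l n t).toReal := by
  induction l generalizing t with
  | nil => exact gcpPmf_eq (fun j => (hlam j).le) ht n
  | cons p rest ih =>
    obtain ⟨r, Lr⟩ := p
    have hLr' : ∀ j, 0 ≤ Lr j := fun j => ((hl _ (List.mem_cons_self)).2 j).le
    have hrest := fun (p : (r : ℕ) × (Fin r → ℝ)) hp => hl p (List.mem_cons_of_mem _ hp)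
    show (∑' m : ℕ, iterGcpPmf k lam rest n m * gcpPmf r Lr m t)
        = (∑' m : ℕ, iterE k lam rest n m * gcpE r Lr m t).toReal
    rw [ENNReal.tsum_toReal_eq (fun m => ENNReal.mul_ne_top
      (ne_top_of_le_ne_top ENNReal.one_ne_top (iterE_le_one hk hlam hrest (Nat.cast_nonneg m) n))
      (ne_top_of_le_ne_top ENNReal.one_ne_top (gcpE_le_one hLr' ht m)))]
    congr 1
    funext m
    rw [ENNReal.toReal_mul, ih hrest (Nat.cast_nonneg m), gcpPmf_eq hLr' ht]

lemma real_mean {k : ℕ} (hk : 0 < k) {lam : Fin k → ℝ} (hlam : ∀ j, 0 < lam j)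
    (l : List ((r : ℕ) × (Fin r → ℝ))) (hl : ∀ p ∈ l, 0 < p.1 ∧ ∀ j, 0 < p.2 j)
    {t : ℝ} (ht : 0 ≤ t) :
    ∑' n : ℕ, (n : ℝ) * iterGcpPmf k lam l n t = Apar k lam l * t := by
  obtain ⟨hA, hAB, hmom⟩ := iterE_props hk hlam l hl
  have h1 : ∀ n : ℕ, (n : ℝ) * iterGcpPmf k lam l n t
      = ((n : ℝ≥0∞) * iterE k lam l n t).toReal := by
    intro n
    rw [ENNReal.toReal_mul, show ∀ n : ℕ, ((n : ℝ≥0∞)).toReal = (n:ℝ) from fun _ => rfl, iterPmf_eq hk hlam l hl ht]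
  simp only [h1]
  rw [← ENNReal.tsum_toReal_eq (fun n => ENNReal.mul_ne_top (ENNReal.natCast_ne_top n)
    (ne_top_of_le_ne_top ENNReal.one_ne_top (iterE_le_one hk hlam hl ht n))),
    (hmom t ht).2.1, ENNReal.toReal_ofReal (mul_nonneg hA.le ht)]

lemma real_sq {k : ℕ} (hk : 0 < k) {lam : Fin k → ℝ} (hlam : ∀ j, 0 < lam j)
    (l : List ((r : ℕ) × (Fin r → ℝ))) (hl : ∀ p ∈ l, 0 < p.1 ∧ ∀ j, 0 < p.2 j)
    {t : ℝ} (ht : 0 ≤ t) :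
    ∑' n : ℕ, (n : ℝ) ^ 2 * iterGcpPmf k lam l n t
      = Bpar k lam l * t + (Apar k lam l * t) ^ 2 := by
  obtain ⟨hA, hAB, hmom⟩ := iterE_props hk hlam l hl
  have hB : (0 : ℝ) ≤ Bpar k lam l := hA.le.trans hAB
  have h1 : ∀ n : ℕ, (n : ℝ) ^ 2 * iterGcpPmf k lam l n t
      = ((n : ℝ≥0∞) ^ 2 * iterE k lam l n t).toReal := by
    intro n
    rw [ENNReal.toReal_mul, ENNReal.toReal_pow, show ∀ n : ℕ, ((n : ℝ≥0∞)).toReal = (n:ℝ) from fun _ => rfl,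
      iterPmf_eq hk hlam l hl ht]
  simp only [h1]
  rw [← ENNReal.tsum_toReal_eq (fun n => ENNReal.mul_ne_top
      (ENNReal.pow_ne_top (ENNReal.natCast_ne_top n))
      (ne_top_of_le_ne_top ENNReal.one_ne_top (iterE_le_one hk hlam hl ht n))),
    (hmom t ht).2.2,
    ENNReal.toReal_ofReal (add_nonneg (mul_nonneg hB ht) (sq_nonneg _))]

noncomputable def listFor (K : ℕ → ℕ) (L : (i : ℕ) → Fin (K i) → ℝ) (q : ℕ) :
    List ((r : ℕ) × (Fin r → ℝ)) :=
  (((List.range q).map fun i => (⟨K (i + 1), L (i + 1)⟩ : (r : ℕ) × (Fin r → ℝ))).reverse)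

lemma listFor_zero (K : ℕ → ℕ) (L : (i : ℕ) → Fin (K i) → ℝ) : listFor K L 0 = [] := rfl

lemma listFor_succ (K : ℕ → ℕ) (L : (i : ℕ) → Fin (K i) → ℝ) (q : ℕ) :
    listFor K L (q + 1) = ⟨K (q + 1), L (q + 1)⟩ :: listFor K L q := by
  simp [listFor, List.range_succ]

lemma Apar_listFor (k : ℕ) (lam : Fin k → ℝ) (K : ℕ → ℕ) (L : (i : ℕ) → Fin (K i) → ℝ) :
    ∀ q : ℕ, Apar k lam (listFor K L q)
      = meanRate k lam * ∏ i ∈ Finset.Icc 1 q, meanRate (K i) (L i) := by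
  intro q
  induction q with
  | zero => simp [listFor_zero, Apar]
  | succ q ih =>
    rw [listFor_succ]
    show Apar k lam (listFor K L q) * meanRate (K (q+1)) (L (q+1)) = _
    rw [ih, Finset.prod_Icc_succ_top (Nat.le_add_left 1 q), mul_assoc]

lemma Bpar_listFor (k : ℕ) (lam : Fin k → ℝ) (K : ℕ → ℕ) (L : (i : ℕ) → Fin (K i) → ℝ) :
    ∀ q : ℕ, Bpar k lam (listFor K L q)
      = sqRate k lam * ∏ i ∈ Finset.Icc 1 q, meanRate (K i) (L i)
        + (meanRate k lam) ^ 2 * ∑ r ∈ Finset.Icc 1 q,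
            sqRate (K r) (L r) * (∏ l ∈ Finset.Icc 1 (r - 1), (meanRate (K l) (L l)) ^ 2)
              * ∏ i ∈ Finset.Icc (r + 1) q, meanRate (K i) (L i) := by
  intro q
  induction q with
  | zero => simp [listFor_zero, Bpar]
  | succ q ih =>
    rw [listFor_succ]
    show Bpar k lam (listFor K L q) * meanRate (K (q+1)) (L (q+1))
        + (Apar k lam (listFor K L q)) ^ 2 * sqRate (K (q+1)) (L (q+1)) = _
    rw [ih, Apar_listFor,
      Finset.prod_Icc_succ_top (Nat.le_add_left 1 q),
      Finset.sum_Icc_succ_top (Nat.le_add_left 1 q)]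
    have htop : sqRate (K (q+1)) (L (q+1))
          * (∏ l ∈ Finset.Icc 1 (q + 1 - 1), (meanRate (K l) (L l)) ^ 2)
          * ∏ i ∈ Finset.Icc (q + 1 + 1) (q + 1), meanRate (K i) (L i)
        = sqRate (K (q+1)) (L (q+1)) * ∏ l ∈ Finset.Icc 1 q, (meanRate (K l) (L l)) ^ 2 := by
      rw [Finset.Icc_eq_empty (show ¬(q + 1 + 1 ≤ q + 1) by omega), Finset.prod_empty, mul_one]
      norm_num
    have hsum : ∑ r ∈ Finset.Icc 1 q,
          sqRate (K r) (L r) * (∏ l ∈ Finset.Icc 1 (r - 1), (meanRate (K l) (L l)) ^ 2)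
            * ∏ i ∈ Finset.Icc (r + 1) (q + 1), meanRate (K i) (L i)
        = ∑ r ∈ Finset.Icc 1 q,
            (sqRate (K r) (L r) * (∏ l ∈ Finset.Icc 1 (r - 1), (meanRate (K l) (L l)) ^ 2)
              * ∏ i ∈ Finset.Icc (r + 1) q, meanRate (K i) (L i))
              * meanRate (K (q+1)) (L (q+1)) := by
      refine Finset.sum_congr rfl fun r hr => ?_
      have : r + 1 ≤ q + 1 := by
        have := (Finset.mem_Icc.mp hr).2; omega
      rw [Finset.prod_Icc_succ_top this]; ring
    rw [htop, hsum, ← Finset.sum_mul, mul_pow, ← Finset.prod_pow]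
    ring

/-- mean and variance of the `q`-iterated GCP, and overdispersion.
The `i`-th subordinating GCP (`i = 1,…,q`) has `K i` jump rates `L i ·`. -/
theorem iterGcp_mean_var (k : ℕ) (hk : 0 < k) (lam : Fin k → ℝ) (hlam : ∀ j, 0 < lam j)
    (q : ℕ) (hq : 0 < q) (K : ℕ → ℕ) (hK : ∀ i ∈ Finset.Icc 1 q, 0 < K i)
    (L : (i : ℕ) → Fin (K i) → ℝ) (hL : ∀ i ∈ Finset.Icc 1 q, ∀ j, 0 < L i j)
    (t : ℝ) (ht : 0 ≤ t)
    (P : ℕ → ℝ → ℝ)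
    (hP : P = iterGcpPmf k lam
      (((List.range q).map fun i => (⟨K (i + 1), L (i + 1)⟩ : (r : ℕ) × (Fin r → ℝ))).reverse)) :
    (∑' n : ℕ, (n : ℝ) * P n t =
      meanRate k lam * (∏ i ∈ Finset.Icc 1 q, meanRate (K i) (L i)) * t) ∧
    (∑' n : ℕ, (n : ℝ) ^ 2 * P n t - (∑' n : ℕ, (n : ℝ) * P n t) ^ 2 =
      sqRate k lam * (∏ i ∈ Finset.Icc 1 q, meanRate (K i) (L i)) * t +
        (meanRate k lam) ^ 2 * (∏ r ∈ Finset.Icc 1 (q - 1), (meanRate (K r) (L r)) ^ 2) *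
          sqRate (K q) (L q) * t +
        (meanRate k lam) ^ 2 *
          ∑ r ∈ Finset.Icc 1 (q - 1),
            sqRate (K r) (L r) * t * (∏ l ∈ Finset.Icc 1 (r - 1), (meanRate (K l) (L l)) ^ 2) *
              (∏ i ∈ Finset.Icc (r + 1) q, meanRate (K i) (L i))) ∧
    (0 < t →
      ∑' n : ℕ, (n : ℝ) * P n t <
        ∑' n : ℕ, (n : ℝ) ^ 2 * P n t - (∑' n : ℕ, (n : ℝ) * P n t) ^ 2) := by
  obtain ⟨q', rfl⟩ : ∃ q', q = q' + 1 := ⟨q - 1, (Nat.succ_pred_eq_of_pos hq).symm⟩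
  have hPl : P = iterGcpPmf k lam (listFor K L (q' + 1)) := hP
  have hgood : ∀ p ∈ listFor K L (q' + 1), 0 < p.1 ∧ ∀ j, 0 < p.2 j := by
    intro p hp
    simp only [listFor, List.mem_reverse, List.mem_map, List.mem_range] at hp
    obtain ⟨i, hi, rfl⟩ := hp
    exact ⟨hK (i + 1) (Finset.mem_Icc.mpr ⟨by omega, by omega⟩),
      hL (i + 1) (Finset.mem_Icc.mpr ⟨by omega, by omega⟩)⟩
  have hgood' : ∀ p ∈ listFor K L q', 0 < p.1 ∧ ∀ j, 0 < p.2 j := by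
    intro p hp
    refine hgood p ?_
    rw [listFor_succ]
    exact List.mem_cons_of_mem _ hp
  have hmean := real_mean hk hlam _ hgood ht
  have hsq := real_sq hk hlam _ hgood ht
  have hApos : 0 < Apar k lam (listFor K L (q' + 1)) :=
    (iterE_props hk hlam _ hgood).1
  -- closed forms
  have hAcl := Apar_listFor k lam K L (q' + 1)
  have hBcl := Bpar_listFor k lam K L (q' + 1)
  -- variance identity in closed form
  have hBt : Bpar k lam (listFor K L (q' + 1)) * t
      = sqRate k lam * (∏ i ∈ Finset.Icc 1 (q' + 1), meanRate (K i) (L i)) * t +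
        (meanRate k lam) ^ 2
          * (∏ r ∈ Finset.Icc 1 (q' + 1 - 1), (meanRate (K r) (L r)) ^ 2)
          * sqRate (K (q' + 1)) (L (q' + 1)) * t +
        (meanRate k lam) ^ 2 *
          ∑ r ∈ Finset.Icc 1 (q' + 1 - 1),
            sqRate (K r) (L r) * t
              * (∏ l ∈ Finset.Icc 1 (r - 1), (meanRate (K l) (L l)) ^ 2)
              * (∏ i ∈ Finset.Icc (r + 1) (q' + 1), meanRate (K i) (L i)) := by
    rw [hBcl]
    have hq1 : q' + 1 - 1 = q' := rfl
    rw [hq1, Finset.sum_Icc_succ_top (Nat.le_add_left 1 q')]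
    have htop : sqRate (K (q' + 1)) (L (q' + 1))
          * (∏ l ∈ Finset.Icc 1 (q' + 1 - 1), (meanRate (K l) (L l)) ^ 2)
          * ∏ i ∈ Finset.Icc (q' + 1 + 1) (q' + 1), meanRate (K i) (L i)
        = sqRate (K (q' + 1)) (L (q' + 1))
            * ∏ l ∈ Finset.Icc 1 q', (meanRate (K l) (L l)) ^ 2 := by
      rw [Finset.Icc_eq_empty (show ¬(q' + 1 + 1 ≤ q' + 1) by omega), Finset.prod_empty,
        mul_one, hq1]
    rw [htop]
    have hsum2 : ∑ r ∈ Finset.Icc 1 q',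
          sqRate (K r) (L r) * t
            * (∏ l ∈ Finset.Icc 1 (r - 1), (meanRate (K l) (L l)) ^ 2)
            * (∏ i ∈ Finset.Icc (r + 1) (q' + 1), meanRate (K i) (L i))
        = (∑ r ∈ Finset.Icc 1 q',
            sqRate (K r) (L r)
              * (∏ l ∈ Finset.Icc 1 (r - 1), (meanRate (K l) (L l)) ^ 2)
              * (∏ i ∈ Finset.Icc (r + 1) (q' + 1), meanRate (K i) (L i))) * t := by
      rw [Finset.sum_mul]
      exact Finset.sum_congr rfl fun r _ => by ring
    rw [hsum2]
    ring
  refine ⟨?_, ?_, ?_⟩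
  · rw [hPl, hmean, hAcl]
  · rw [hPl, hsq, hmean, add_sub_cancel_right, hBt]
  · intro htpos
    rw [hPl, hsq, hmean, add_sub_cancel_right]
    have hstrict : Apar k lam (listFor K L (q' + 1)) < Bpar k lam (listFor K L (q' + 1)) := by
      obtain ⟨hA, hAB, _⟩ := iterE_props hk hlam _ hgood'
      have hmem : q' + 1 ∈ Finset.Icc 1 (q' + 1) := Finset.mem_Icc.mpr ⟨by omega, by omega⟩
      have hmu : 0 < meanRate (K (q' + 1)) (L (q' + 1)) :=
        meanRate_pos (hK _ hmem) (hL _ hmem)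
      have hs : 0 < sqRate (K (q' + 1)) (L (q' + 1)) :=
        sqRate_pos (hK _ hmem) (hL _ hmem)
      rw [listFor_succ]
      show Apar k lam (listFor K L q') * meanRate (K (q' + 1)) (L (q' + 1))
        < Bpar k lam (listFor K L q') * meanRate (K (q' + 1)) (L (q' + 1))
          + (Apar k lam (listFor K L q')) ^ 2 * sqRate (K (q' + 1)) (L (q' + 1))
      nlinarith [mul_le_mul_of_nonneg_right hAB hmu.le, mul_pos (pow_pos hA 2) hs]
    exact mul_lt_mul_of_pos_right hstrict htpos
end
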